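/- arXiv:2206.13606 — 4 statements merged into one kernel-verified Lean document; each statement's English description precedes it below -/
import Mathlib

section
/- With λ_t defined as λ_t = ρ_{max(t, τ₁)}/(1 + ln(τ₂/τ₁)) where ρ_t = B/t, for every integer T ∈ [τ₁, τ₂]: (1/T)·∑_{t=1}^T min{λ_t/ρ_T, 1} ≥ 1/(1 + ln(τ₂/τ₁)). -/
/-- With `λ_t = ρ_{max(t,τ₁)}/(1 + ln(τ₂/τ₁))` where `ρ_t = B/t`, for every integer
`T ∈ [τ₁, τ₂]`: `(1/T)·∑_{t=1}^T min{λ_t/ρ_T, 1} ≥ 1/(1 + ln(τ₂/τ₁))`. -/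
theorem stmt9 (B : ℝ) (hB : 0 < B) (τ₁ τ₂ : ℕ) (h1 : 1 ≤ τ₁) (h12 : τ₁ ≤ τ₂)
    (T : ℕ) (hT1 : τ₁ ≤ T) (hT2 : T ≤ τ₂) :
    (1 / (T : ℝ)) * ∑ t ∈ Finset.Icc 1 T,
        min ((B / ((max t τ₁ : ℕ) : ℝ) / (1 + Real.log ((τ₂ : ℝ) / τ₁))) / (B / (T : ℝ))) 1
      ≥ 1 / (1 + Real.log ((τ₂ : ℝ) / τ₁)) := by
  set L := 1 + Real.log ((τ₂ : ℝ) / τ₁) with hLdef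
  have hτ1 : (0 : ℝ) < τ₁ := by exact_mod_cast h1
  have hlog : 0 ≤ Real.log ((τ₂ : ℝ) / τ₁) :=
    Real.log_nonneg ((one_le_div hτ1).mpr (by exact_mod_cast h12))
  have hL1 : (1 : ℝ) ≤ L := by simpa [hLdef] using hlog
  have hLpos : (0 : ℝ) < L := lt_of_lt_of_le one_pos hL1
  have hTpos : (0 : ℝ) < T := by exact_mod_cast lt_of_lt_of_le h1 hT1
  have hBT : (0 : ℝ) < B / T := div_pos hB hTpos
  have key : ∀ t ∈ Finset.Icc 1 T,
      1 / L ≤ min ((B / ((max t τ₁ : ℕ) : ℝ) / L) / (B / (T : ℝ))) 1 := by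
    intro t ht
    rw [Finset.mem_Icc] at ht
    have hm1 : 1 ≤ max t τ₁ := le_max_of_le_left ht.1
    have hmpos : (0 : ℝ) < ((max t τ₁ : ℕ) : ℝ) := by exact_mod_cast hm1
    have hmT : ((max t τ₁ : ℕ) : ℝ) ≤ T := by
      exact_mod_cast max_le ht.2 hT1
    refine le_min ?_ ((div_le_one hLpos).mpr hL1)
    have h2 : B / (T : ℝ) ≤ B / ((max t τ₁ : ℕ) : ℝ) :=
      div_le_div_of_nonneg_left hB.le hmpos hmT
    have h3 : (1 : ℝ) ≤ (B / ((max t τ₁ : ℕ) : ℝ)) / (B / (T : ℝ)) :=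
      (one_le_div hBT).mpr h2
    calc 1 / L ≤ ((B / ((max t τ₁ : ℕ) : ℝ)) / (B / (T : ℝ))) / L :=
          by gcongr
      _ = (B / ((max t τ₁ : ℕ) : ℝ) / L) / (B / (T : ℝ)) := by
          rw [div_right_comm]
  have hsum : ((T : ℝ)) * (1 / L) ≤ ∑ t ∈ Finset.Icc 1 T,
      min ((B / ((max t τ₁ : ℕ) : ℝ) / L) / (B / (T : ℝ))) 1 := by
    have := Finset.sum_le_sum key
    simpa [Finset.sum_const, Nat.card_Icc, mul_comm] using this
  have : (1 / (T : ℝ)) * ((T : ℝ) * (1 / L)) ≤ (1 / (T : ℝ)) * ∑ t ∈ Finset.Icc 1 T,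
      min ((B / ((max t τ₁ : ℕ) : ℝ) / L) / (B / (T : ℝ))) 1 :=
    mul_le_mul_of_nonneg_left hsum (by positivity)
  calc (1 / L) = (1 / (T : ℝ)) * ((T : ℝ) * (1 / L)) := by
        field_simp
    _ ≤ _ := this
end

section
/- Let H be the CDF on [0,1] given by H(s) = s^{r/(1-r)} for 0 < r < 1. For a random variable s with CDF H and threshold x ∈ [0,1], the expected accepted cost E[s·1{s ≤ x}] = r·x^{1/(1-r)} and the acceptance probability H(x) = x^{r/(1-r)}; consequently the expected reward r^r·H(x) equals (E[s·1{s ≤ x}])^r. -/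
open MeasureTheory NNReal ENNReal

lemma stmt14_aux (p : ℝ) (hp : 0 < p) (y : ℝ) (hy0 : 0 ≤ y) :
    (∫ s in Set.Ioc (0:ℝ) y, p * s ^ (p - 1)) = y ^ p := by
  rw [← intervalIntegral.integral_of_le hy0, intervalIntegral.integral_const_mul,
    integral_rpow (Or.inl (by linarith))]
  rw [sub_add_cancel, Real.zero_rpow hp.ne']
  field_simp
  simp

/-- For a random consumption rate `s` with CDF `H(s) = s^{r/(1-r)}` on `[0,1]` and a
threshold `x ∈ [0,1]`: `E[s·1{s≤x}] = r·x^{1/(1-r)}`, `H(x) = x^{r/(1-r)}`, and the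
expected reward `r^r·H(x)` equals `(E[s·1{s≤x}])^r`. -/
theorem stmt14 (r : ℝ) (hr0 : 0 < r) (hr1 : r < 1) (x : ℝ) (hx0 : 0 ≤ x) (hx1 : x ≤ 1)
    (μ : Measure ℝ) [IsProbabilityMeasure μ]
    (hcdf : ∀ y : ℝ, 0 ≤ y → y ≤ 1 →
      (μ (Set.Iic y)).toReal = y ^ (r / (1 - r)))
    (hsupp : μ (Set.Icc (0 : ℝ) 1)ᶜ = 0) :
    (∫ s in Set.Iic x, s ∂μ) = r * x ^ (1 / (1 - r)) ∧
    (μ (Set.Iic x)).toReal = x ^ (r / (1 - r)) ∧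
    r ^ r * (μ (Set.Iic x)).toReal = (∫ s in Set.Iic x, s ∂μ) ^ r := by
  have h1r : 0 < 1 - r := by linarith
  set p : ℝ := r / (1 - r) with hpdef
  have hp : 0 < p := div_pos hr0 h1r
  have hp1 : p + 1 = 1 / (1 - r) := by rw [hpdef]; field_simp; ring
  -- density
  set f : ℝ → ℝ≥0 := fun s => (Set.Ioc (0:ℝ) 1).indicator
      (fun s => Real.toNNReal (p * s ^ (p - 1))) s with hfdef
  have hfmeas : Measurable f := by
    apply Measurable.indicator _ measurableSet_Ioc
    fun_prop
  set ν : Measure ℝ := volume.withDensity (fun s => (f s : ℝ≥0∞)) with hnudef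
  -- integrability of the density
  have hint : ∀ y : ℝ, 0 ≤ y → y ≤ 1 →
      IntegrableOn (fun s => p * s ^ (p - 1)) (Set.Ioc 0 y) volume := by
    intro y hy0 hy1
    have := (intervalIntegral.intervalIntegrable_rpow' (a := 0) (b := y)
      (r := p - 1) (by linarith)).const_mul p
    rw [intervalIntegrable_iff, Set.uIoc_of_le hy0] at this
    exact this
  have hnonneg : ∀ y : ℝ, (0:ℝ → ℝ) ≤ᵐ[volume.restrict (Set.Ioc (0:ℝ) y)]
      (fun s => p * s ^ (p - 1)) := by
    intro y
    filter_upwards [ae_restrict_mem measurableSet_Ioc] with s hs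
    exact mul_nonneg hp.le (Real.rpow_nonneg hs.1.le _)
  -- computing ν on Iic
  have hcoe : ∀ s : ℝ, ((f s : ℝ≥0∞)) = (Set.Ioc (0:ℝ) 1).indicator
      (fun s => ENNReal.ofReal (p * s ^ (p - 1))) s := by
    intro s
    rw [hfdef]
    by_cases hs : s ∈ Set.Ioc (0:ℝ) 1 <;>
      simp [Set.indicator_of_mem, Set.indicator_of_notMem, hs, ENNReal.ofReal]
  have hnuIic : ∀ a : ℝ, ν (Set.Iic a) =
      ∫⁻ s in Set.Ioc (0:ℝ) 1 ∩ Set.Iic a, ENNReal.ofReal (p * s ^ (p - 1)) := by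
    intro a
    rw [hnudef, withDensity_apply _ measurableSet_Iic]
    simp_rw [hcoe]
    rw [lintegral_indicator measurableSet_Ioc _, Measure.restrict_restrict measurableSet_Ioc]
  have hnu : ∀ y : ℝ, 0 ≤ y → y ≤ 1 → ν (Set.Iic y) = ENNReal.ofReal (y ^ p) := by
    intro y hy0 hy1
    rw [hnuIic y]
    have hset : Set.Ioc (0:ℝ) 1 ∩ Set.Iic y = Set.Ioc 0 y := by
      rw [Set.Ioc_inter_Iic, min_eq_right hy1]
    rw [hset, ← ofReal_integral_eq_lintegral_ofReal (hint y hy0 hy1) (hnonneg y),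
      stmt14_aux p hp y hy0]
  -- μ = ν
  have hμν : μ = ν := by
    apply Measure.ext_of_Iic
    intro a
    rcases lt_or_ge a 0 with ha | ha
    · have h1 : μ (Set.Iic a) = 0 := by
        apply measure_mono_null _ hsupp
        intro s hs
        simp only [Set.mem_compl_iff, Set.mem_Icc, not_and_or, not_le]
        left; exact lt_of_le_of_lt (Set.mem_Iic.mp hs) ha
      have h2 : ν (Set.Iic a) = 0 := by
        rw [hnuIic a]
        have : Set.Ioc (0:ℝ) 1 ∩ Set.Iic a = ∅ := by
          ext s; simp only [Set.mem_inter_iff, Set.mem_Ioc, Set.mem_Iic, Set.mem_empty_iff_false,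
            iff_false]
          rintro ⟨⟨h1', _⟩, h2'⟩; linarith
        rw [this]
        simp
      rw [h1, h2]
    rcases le_or_gt a 1 with ha1 | ha1
    · rw [hnu a ha ha1, ← hcdf a ha ha1, ENNReal.ofReal_toReal (measure_ne_top μ _)]
    · -- a > 1
      have h1 : μ (Set.Iic a) = 1 := by
        have hIoi : μ (Set.Ioi a) = 0 := by
          apply measure_mono_null _ hsupp
          intro s hs
          simp only [Set.mem_compl_iff, Set.mem_Icc, not_and_or, not_le]
          right; exact lt_trans ha1 (Set.mem_Ioi.mp hs)
        have : (1:ℝ≥0∞) = μ Set.univ := (measure_univ).symm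
        rw [this, ← Set.Iic_union_Ioi (a := a)]
        rw [measure_union (Set.Iic_disjoint_Ioi le_rfl) measurableSet_Ioi, hIoi, add_zero]
      have h2 : ν (Set.Iic a) = 1 := by
        rw [hnuIic a]
        have hset : Set.Ioc (0:ℝ) 1 ∩ Set.Iic a = Set.Ioc 0 1 := by
          rw [Set.Ioc_inter_Iic, min_eq_left ha1.le]
        rw [hset, ← ofReal_integral_eq_lintegral_ofReal (hint 1 zero_le_one le_rfl)
          (hnonneg 1), stmt14_aux p hp 1 zero_le_one, Real.one_rpow, ENNReal.ofReal_one]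
      rw [h1, h2]
  -- the main integral
  have hmain : (∫ s in Set.Iic x, s ∂μ) = r * x ^ (1 / (1 - r)) := by
    rw [hμν, hnudef,
      setIntegral_withDensity_eq_setIntegral_smul hfmeas _ measurableSet_Iic]
    have heq : ∀ s : ℝ, f s • s = (Set.Ioc (0:ℝ) 1).indicator
        (fun s => (p * s ^ (p - 1)) * s) s := by
      intro s
      rw [hfdef]
      by_cases hs : s ∈ Set.Ioc (0:ℝ) 1
      · simp only [Set.indicator_of_mem hs]
        rw [NNReal.smul_def, Real.coe_toNNReal _
          (mul_nonneg hp.le (Real.rpow_nonneg hs.1.le _))]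
        rw [smul_eq_mul]
      · simp [Set.indicator_of_notMem hs]
    simp_rw [heq]
    rw [setIntegral_indicator measurableSet_Ioc]
    have hset : Set.Iic x ∩ Set.Ioc (0:ℝ) 1 = Set.Ioc 0 x := by
      rw [Set.inter_comm, Set.Ioc_inter_Iic, min_eq_right hx1]
    rw [hset]
    have hcong : ∫ s in Set.Ioc (0:ℝ) x, (p * s ^ (p - 1)) * s =
        ∫ s in Set.Ioc (0:ℝ) x, p * s ^ p := by
      apply setIntegral_congr_fun measurableSet_Ioc
      intro s hs
      simp only
      rw [mul_assoc, ← Real.rpow_add_one hs.1.ne']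
      ring_nf
    rw [hcong]
    rw [← intervalIntegral.integral_of_le hx0, intervalIntegral.integral_const_mul,
      integral_rpow (Or.inl (by linarith)), Real.zero_rpow (by positivity), hp1]
    rw [sub_zero, hpdef]
    field_simp
  refine ⟨hmain, hcdf x hx0 hx1, ?_⟩
  rw [hmain, hcdf x hx0 hx1,
    Real.mul_rpow hr0.le (Real.rpow_nonneg hx0 _), ← Real.rpow_mul hx0]
  have hexp : 1 / (1 - r) * r = p := by rw [hpdef]; ring
  rw [hexp]
end

section
/- For the deterministic single-resource instance with reward f_r(x) = x^r (r ∈ (0,1)), linear consumption, budget B, and uncertainty window [τ₁, τ₂]: if an algorithm fixes a proxy horizon T* ∈ [τ₁, τ₂] and plays the hindsight-optimal constant action B/T* until the budget is exhausted, then its performance ratio at T = τ₁ is (τ₁/T*)^r and at T = τ₂ is (T*/τ₂)^{1−r}. Consequently min over r ∈ (0,1) of max over these two ratios is at most (τ₂/τ₁)^{−1/2}. -/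
/-- For the deterministic instance with reward `x^r`, budget `B`, window `[τ₁,τ₂]` and
proxy horizon `T* ∈ [τ₁,τ₂]` played at constant rate `B/T*`: the performance ratio at
`T = τ₁` is `(τ₁/T*)^r`, at `T = τ₂` is `(T*/τ₂)^{1-r}`, and the infimum over
`r ∈ (0,1)` of the minimum of these two ratios is at most `(τ₂/τ₁)^{-1/2}`. -/
theorem stmt16 (B : ℝ) (hB : 0 < B) (τ₁ τ₂ Ts : ℕ)
    (h1 : 1 ≤ τ₁) (hT1 : τ₁ ≤ Ts) (hT2 : Ts ≤ τ₂) :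
    (∀ r : ℝ, 0 < r → r < 1 →
        ((B / (Ts : ℝ)) ^ r * (τ₁ : ℝ)) / (B ^ r * (τ₁ : ℝ) ^ (1 - r))
          = ((τ₁ : ℝ) / (Ts : ℝ)) ^ r) ∧
    (∀ r : ℝ, 0 < r → r < 1 →
        ((B / (Ts : ℝ)) ^ r * (Ts : ℝ)) / (B ^ r * (τ₂ : ℝ) ^ (1 - r))
          = ((Ts : ℝ) / (τ₂ : ℝ)) ^ (1 - r)) ∧
    ⨅ r : Set.Ioo (0 : ℝ) 1,
        min (((τ₁ : ℝ) / (Ts : ℝ)) ^ (r : ℝ)) (((Ts : ℝ) / (τ₂ : ℝ)) ^ (1 - (r : ℝ)))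
      ≤ ((τ₂ : ℝ) / (τ₁ : ℝ)) ^ (-(1 / 2) : ℝ) := by
  have h1' : (0:ℝ) < τ₁ := by exact_mod_cast lt_of_lt_of_le one_pos h1
  have hTs' : (0:ℝ) < Ts := lt_of_lt_of_le h1' (by exact_mod_cast hT1)
  have hτ2' : (0:ℝ) < τ₂ := lt_of_lt_of_le hTs' (by exact_mod_cast hT2)
  refine ⟨?_, ?_, ?_⟩
  · intro r hr0 hr1
    have hBr : (0:ℝ) < B ^ r := Real.rpow_pos_of_pos hB r
    have hTr : (0:ℝ) < (Ts:ℝ) ^ r := Real.rpow_pos_of_pos hTs' r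
    have hτr : (0:ℝ) < (τ₁:ℝ) ^ r := Real.rpow_pos_of_pos h1' r
    rw [Real.div_rpow hB.le hTs'.le, Real.div_rpow h1'.le hTs'.le,
      Real.rpow_sub h1', Real.rpow_one]
    field_simp
  · intro r hr0 hr1
    have hBr : (0:ℝ) < B ^ r := Real.rpow_pos_of_pos hB r
    have hTr : (0:ℝ) < (Ts:ℝ) ^ r := Real.rpow_pos_of_pos hTs' r
    have hT2r : (0:ℝ) < (τ₂:ℝ) ^ (1-r) := Real.rpow_pos_of_pos hτ2' _
    rw [Real.div_rpow hB.le hTs'.le, Real.div_rpow hTs'.le hτ2'.le,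
      Real.rpow_sub hTs', Real.rpow_one]
    field_simp
  · set a : ℝ := (τ₁:ℝ) / Ts with ha
    set b : ℝ := (Ts:ℝ) / τ₂ with hb
    have ha0 : 0 < a := div_pos h1' hTs'
    have hb0 : 0 < b := div_pos hTs' hτ2'
    have hab : a * b = (τ₁:ℝ) / τ₂ := by
      rw [ha, hb]; field_simp
    have hc : ((τ₂:ℝ) / τ₁) ^ (-(1 / 2) : ℝ) = Real.sqrt (a * b) := by
      rw [Real.rpow_neg (by positivity), ← Real.inv_rpow (by positivity),
        inv_div, hab, ← Real.sqrt_eq_rpow]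
    rw [hc]
    have hbdd : BddBelow (Set.range fun r : Set.Ioo (0:ℝ) 1 =>
        min (a ^ (r:ℝ)) (b ^ (1 - (r:ℝ)))) := by
      refine ⟨0, ?_⟩
      rintro x ⟨r, rfl⟩
      exact le_min (Real.rpow_pos_of_pos ha0 _).le (Real.rpow_pos_of_pos hb0 _).le
    have hmin : min a b ≤ Real.sqrt (a * b) := by
      rcases le_total a b with h | h
      · rw [min_eq_left h]
        nth_rewrite 1 [show a = Real.sqrt (a*a) from (Real.sqrt_mul_self ha0.le).symm]
        exact Real.sqrt_le_sqrt (mul_le_mul_of_nonneg_left h ha0.le)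
      · rw [min_eq_right h]
        nth_rewrite 1 [show b = Real.sqrt (b*b) from (Real.sqrt_mul_self hb0.le).symm]
        exact Real.sqrt_le_sqrt (mul_le_mul_of_nonneg_right h hb0.le)
    refine le_trans ?_ hmin
    have h3 : Filter.Tendsto (fun n : ℕ => (1/((n:ℝ)+2))) Filter.atTop (nhds 0) := by
      simp only [one_div]
      exact tendsto_inv_atTop_zero.comp
        (Filter.tendsto_atTop_add_const_right _ 2 tendsto_natCast_atTop_atTop)
    have h2 : Filter.Tendsto (fun n : ℕ => (1 - 1/((n:ℝ)+2))) Filter.atTop (nhds 1) := by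
      simpa using (tendsto_const_nhds.sub h3)
    rcases le_total a b with h | h
    · rw [min_eq_left h]
      have hseq : Filter.Tendsto (fun n : ℕ => a ^ (1 - 1/((n:ℝ)+2))) Filter.atTop
          (nhds a) := by
        have hcont : ContinuousAt (fun x : ℝ => a ^ x) 1 :=
          Real.continuousAt_const_rpow ha0.ne'
        simpa [Real.rpow_one, Function.comp_def] using hcont.tendsto.comp h2
      refine ge_of_tendsto' hseq fun n => ?_
      have hn : (0:ℝ) ≤ n := n.cast_nonneg
      have hmem : (1 - 1/((n:ℝ)+2)) ∈ Set.Ioo (0:ℝ) 1 := by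
        constructor
        · have : (1/((n:ℝ)+2)) < 1 := by
            rw [div_lt_one (by linarith)]; linarith
          linarith
        · have : (0:ℝ) < 1/((n:ℝ)+2) := by positivity
          linarith
      calc ⨅ r : Set.Ioo (0:ℝ) 1, min (a ^ (r:ℝ)) (b ^ (1 - (r:ℝ)))
          ≤ min (a ^ (1 - 1/((n:ℝ)+2))) (b ^ (1 - (1 - 1/((n:ℝ)+2)))) :=
            ciInf_le hbdd ⟨_, hmem⟩
        _ ≤ a ^ (1 - 1/((n:ℝ)+2)) := min_le_left _ _
    · rw [min_eq_right h]
      have hseq : Filter.Tendsto (fun n : ℕ => b ^ (1 - 1/((n:ℝ)+2))) Filter.atTop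
          (nhds b) := by
        have hcont : ContinuousAt (fun x : ℝ => b ^ x) 1 :=
          Real.continuousAt_const_rpow hb0.ne'
        simpa [Real.rpow_one, Function.comp_def] using hcont.tendsto.comp h2
      refine ge_of_tendsto' hseq fun n => ?_
      have hn : (0:ℝ) ≤ n := n.cast_nonneg
      have hmem : (1/((n:ℝ)+2)) ∈ Set.Ioo (0:ℝ) 1 := by
        constructor
        · positivity
        · rw [div_lt_one (by linarith)]; linarith
      calc ⨅ r : Set.Ioo (0:ℝ) 1, min (a ^ (r:ℝ)) (b ^ (1 - (r:ℝ)))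
          ≤ min (a ^ (1/((n:ℝ)+2))) (b ^ (1 - (1/((n:ℝ)+2)))) :=
            ciInf_le hbdd ⟨_, hmem⟩
        _ ≤ b ^ (1 - 1/((n:ℝ)+2)) := min_le_right _ _
end

section
/- Let B ∈ R_{++}^m, integers 1 ≤ τ₁ ≤ τ₂, α ∈ [0,1], prediction T_P ∈ [τ₁, τ₂]. Define λ_t = α/(1+ln(τ₂/τ₁))·ρ_{max(t,τ₁)} + (1−α)·ρ_{T_P}·1{t ≤ T_P}, where ρ_t = B/t (componentwise). Then (i) ∑_{t=1}^{τ₂} λ_t ≤ B, (ii) for all T ∈ [τ₁, τ₂], (1/T)∑_{t=1}^T min{min_j λ_{t,j}/ρ_{T,j}, 1} ≥ α/(1+ln(τ₂/τ₁)), and (iii) for T = T_P this quantity is at least 1 − α + α/(1+ln(τ₂/τ₁)). -/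
lemma harmonic_le_log' (a : ℕ) (ha : 1 ≤ a) (b : ℕ) (hab : a ≤ b) :
    ∑ t ∈ Finset.Ioc a b, (1:ℝ)/t ≤ Real.log ((b : ℝ) / a) := by
  have ha0 : (0:ℝ) < a := by exact_mod_cast ha
  induction b, hab using Nat.le_induction with
  | base => simp [div_self (ne_of_gt ha0)]
  | succ n hn ih =>
    have hn0 : (0:ℝ) < n := by have : (1:ℕ) ≤ n := le_trans ha hn; exact_mod_cast this
    have hn1 : (0:ℝ) < (n:ℝ) + 1 := by linarith
    rw [Finset.sum_Ioc_succ_top hn]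
    have key : (1:ℝ)/(n+1) ≤ Real.log ((n:ℝ)+1) - Real.log n := by
      have h := Real.log_le_sub_one_of_pos (show (0:ℝ) < n/(n+1) by positivity)
      rw [Real.log_div (ne_of_gt hn0) (ne_of_gt hn1)] at h
      have h2 : (n:ℝ)/(n+1) - 1 = -(1/(n+1)) := by field_simp; ring
      linarith
    have hlog : Real.log ((↑(n+1):ℝ) / a)
        = Real.log ((n:ℝ)/a) + (Real.log ((n:ℝ)+1) - Real.log n) := by
      push_cast
      rw [Real.log_div (ne_of_gt hn1) (ne_of_gt ha0), Real.log_div (ne_of_gt hn0) (ne_of_gt ha0)]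
      ring
    rw [hlog]
    push_cast
    linarith

/-- The simple prediction-based target sequence
`λ_t = α/(1+ln(τ₂/τ₁))·ρ_{max(t,τ₁)} + (1-α)·ρ_{T_P}·1{t ≤ T_P}` (with `ρ_t = B/t`)
satisfies the budget constraint, is `α/(1+ln(τ₂/τ₁))`-competitive for every
`T ∈ [τ₁,τ₂]`, and is `(1-α+α/(1+ln(τ₂/τ₁)))`-consistent at `T = T_P`. -/
theorem stmt17 (m : ℕ) (hm : 0 < m) (B : Fin m → ℝ) (hB : ∀ j, 0 < B j)
    (τ₁ τ₂ TP : ℕ) (h1 : 1 ≤ τ₁) (h12 : τ₁ ≤ τ₂) (hP1 : τ₁ ≤ TP) (hP2 : TP ≤ τ₂)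
    (α : ℝ) (hα0 : 0 ≤ α) (hα1 : α ≤ 1) :
    let L := Real.log ((τ₂ : ℝ) / τ₁)
    let ρ : ℕ → Fin m → ℝ := fun t j => B j / t
    let lam : ℕ → Fin m → ℝ := fun t j =>
      α / (1 + L) * ρ (max t τ₁) j + (1 - α) * (if t ≤ TP then ρ TP j else 0)
    (∀ j, ∑ t ∈ Finset.Icc 1 τ₂, lam t j ≤ B j) ∧
    (∀ T, τ₁ ≤ T → T ≤ τ₂ →
      (1 / (T : ℝ)) * ∑ t ∈ Finset.Icc 1 T, min (⨅ j, lam t j / ρ T j) 1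
        ≥ α / (1 + L)) ∧
    (1 / (TP : ℝ)) * ∑ t ∈ Finset.Icc 1 TP, min (⨅ j, lam t j / ρ TP j) 1
        ≥ 1 - α + α / (1 + L) := by
  intro L ρ lam
  haveI : Nonempty (Fin m) := ⟨⟨0, hm⟩⟩
  have hτ₁pos : (0:ℝ) < τ₁ := by exact_mod_cast h1
  have hτ₂pos : (0:ℝ) < τ₂ := by have := le_trans h1 h12; exact_mod_cast this
  have hTPpos : (0:ℝ) < TP := by have := le_trans h1 hP1; exact_mod_cast this
  have hL0 : 0 ≤ L :=
    Real.log_nonneg ((one_le_div hτ₁pos).mpr (by exact_mod_cast h12))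
  have hL1 : (0:ℝ) < 1 + L := by linarith
  have hc0 : 0 ≤ α / (1 + L) := div_nonneg hα0 hL1.le
  have hc1 : α / (1 + L) ≤ 1 := by
    rw [div_le_one hL1]; linarith
  -- per-term lower bound, used in parts (ii) and (iii)
  have hterm : ∀ (T t : ℕ), τ₁ ≤ T → 1 ≤ t → t ≤ T → ∀ j,
      α / (1 + L) * ρ T j ≤ lam t j := by
    intro T t hT1 ht1 htT j
    have hBj := hB j
    have hT0 : (0:ℝ) < T := by have := le_trans h1 hT1; exact_mod_cast this
    have hmaxpos : (0:ℝ) < ((max t τ₁ : ℕ) : ℝ) := by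
      have : (1:ℕ) ≤ max t τ₁ := le_trans h1 (le_max_right _ _)
      exact_mod_cast this
    have hmax : ((max t τ₁ : ℕ) : ℝ) ≤ (T : ℝ) := by
      exact_mod_cast max_le htT hT1
    have h1' : B j / (T : ℝ) ≤ B j / ((max t τ₁ : ℕ) : ℝ) :=
      div_le_div_of_nonneg_left hBj.le hmaxpos hmax --  hBj hmaxpos hmax
    have hind : 0 ≤ (1 - α) * (if t ≤ TP then ρ TP j else 0) := by
      apply mul_nonneg (by linarith)
      split
      · exact (div_pos hBj hTPpos).le
      · exact le_rfl
    calc α / (1 + L) * ρ T j ≤ α / (1 + L) * ρ (max t τ₁) j :=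
          mul_le_mul_of_nonneg_left h1' hc0
      _ ≤ lam t j := le_add_of_nonneg_right hind
  refine ⟨?_, ?_, ?_⟩
  · -- (i) budget
    intro j
    have hBj := hB j
    have hsplit : ∑ t ∈ Finset.Icc 1 τ₂, lam t j
        = α / (1 + L) * ∑ t ∈ Finset.Icc 1 τ₂, ρ (max t τ₁) j
          + (1 - α) * ∑ t ∈ Finset.Icc 1 τ₂, (if t ≤ TP then ρ TP j else 0) := by
      rw [Finset.mul_sum, Finset.mul_sum, ← Finset.sum_add_distrib]
    have hS1 : ∑ t ∈ Finset.Icc 1 τ₂, ρ (max t τ₁) j ≤ B j * (1 + L) := by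
      have hIcc : Finset.Icc 1 τ₂ = Finset.Ioc 0 τ₂ := by
        ext x; simp [Nat.lt_iff_add_one_le]
      rw [hIcc, ← Finset.sum_Ioc_consecutive _ (Nat.zero_le τ₁) h12]
      have hA : ∑ t ∈ Finset.Ioc 0 τ₁, ρ (max t τ₁) j = B j := by
        have hcg : ∀ t ∈ Finset.Ioc 0 τ₁, ρ (max t τ₁) j = B j / (τ₁ : ℝ) := by
          intro t ht
          have hmt : max t τ₁ = τ₁ := max_eq_right (Finset.mem_Ioc.mp ht).2
          simp only [ρ, hmt]
        rw [Finset.sum_congr rfl hcg, Finset.sum_const]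
        simp only [Nat.card_Ioc, Nat.sub_zero, nsmul_eq_mul]
        field_simp
      have hBsum : ∑ t ∈ Finset.Ioc τ₁ τ₂, ρ (max t τ₁) j ≤ B j * L := by
        have : ∑ t ∈ Finset.Ioc τ₁ τ₂, ρ (max t τ₁) j
            = B j * ∑ t ∈ Finset.Ioc τ₁ τ₂, (1:ℝ)/t := by
          rw [Finset.mul_sum]
          refine Finset.sum_congr rfl fun t ht => ?_
          have : max t τ₁ = t := max_eq_left (le_of_lt (Finset.mem_Ioc.mp ht).1)
          rw [this]; show B j / (t:ℝ) = B j * (1/(t:ℝ)); ring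
        rw [this]
        exact mul_le_mul_of_nonneg_left (harmonic_le_log' τ₁ h1 τ₂ h12) hBj.le
      linarith
    have hS2 : ∑ t ∈ Finset.Icc 1 τ₂, (if t ≤ TP then ρ TP j else 0) = B j := by
      rw [← Finset.sum_filter]
      have hfil : (Finset.Icc 1 τ₂).filter (· ≤ TP) = Finset.Icc 1 TP := by
        ext x
        simp only [Finset.mem_filter, Finset.mem_Icc]
        constructor
        · rintro ⟨⟨hx1, _⟩, hx2⟩; exact ⟨hx1, hx2⟩
        · rintro ⟨hx1, hx2⟩; exact ⟨⟨hx1, le_trans hx2 hP2⟩, hx2⟩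
      rw [hfil, Finset.sum_const]
      simp only [Nat.card_Icc, Nat.add_sub_cancel, nsmul_eq_mul]
      show (TP : ℝ) * (B j / TP) = B j
      field_simp
    rw [hsplit, hS2]
    have hmul : α / (1 + L) * ∑ t ∈ Finset.Icc 1 τ₂, ρ (max t τ₁) j
        ≤ α / (1 + L) * (B j * (1 + L)) := mul_le_mul_of_nonneg_left hS1 hc0
    have heq : α / (1 + L) * (B j * (1 + L)) = α * B j := by
      field_simp
    nlinarith
  · -- (ii) robustness
    intro T hT1 hT2
    have hT0 : (0:ℝ) < T := by have := le_trans h1 hT1; exact_mod_cast this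
    have hbound : ∀ t ∈ Finset.Icc 1 T,
        α / (1 + L) ≤ min (⨅ j, lam t j / ρ T j) 1 := by
      intro t ht
      rw [Finset.mem_Icc] at ht
      refine le_min (le_ciInf fun j => ?_) hc1
      have hBj := hB j
      have hρpos : 0 < ρ T j := div_pos hBj hT0
      rw [le_div_iff₀ hρpos]
      exact hterm T t hT1 ht.1 ht.2 j
    have hsum := Finset.sum_le_sum hbound
    rw [Finset.sum_const, Nat.card_Icc, Nat.add_sub_cancel, nsmul_eq_mul] at hsum
    rw [ge_iff_le]
    calc α / (1 + L) = (1 / (T:ℝ)) * ((T:ℝ) * (α / (1 + L))) := by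
          field_simp
      _ ≤ (1 / (T:ℝ)) * ∑ t ∈ Finset.Icc 1 T, min (⨅ j, lam t j / ρ T j) 1 :=
          mul_le_mul_of_nonneg_left hsum (by positivity)
  · -- (iii) consistency
    have hc1' : 1 - α + α / (1 + L) ≤ 1 := by
      have : α / (1 + L) ≤ α := by
        rw [div_le_iff₀ hL1]; nlinarith
      linarith
    have hbound : ∀ t ∈ Finset.Icc 1 TP,
        1 - α + α / (1 + L) ≤ min (⨅ j, lam t j / ρ TP j) 1 := by
      intro t ht
      rw [Finset.mem_Icc] at ht
      refine le_min (le_ciInf fun j => ?_) hc1'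
      have hBj := hB j
      have hρpos : 0 < ρ TP j := div_pos hBj hTPpos
      rw [le_div_iff₀ hρpos]
      have hmain := hterm TP t hP1 ht.1 ht.2 j
      have hlam : lam t j = α / (1 + L) * ρ (max t τ₁) j + (1 - α) * ρ TP j := by
        show _ = _
        simp only [lam, if_pos ht.2]
      have hexp : (1 - α + α / (1 + L)) * ρ TP j
          = α / (1 + L) * ρ TP j + (1 - α) * ρ TP j := by ring
      rw [hexp, hlam]
      have hmaxpos : (0:ℝ) < ((max t τ₁ : ℕ) : ℝ) := by
        have : (1:ℕ) ≤ max t τ₁ := le_trans h1 (le_max_right _ _)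
        exact_mod_cast this
      have hmax : ((max t τ₁ : ℕ) : ℝ) ≤ (TP : ℝ) := by
        exact_mod_cast max_le ht.2 hP1
      have h1' : B j / (TP : ℝ) ≤ B j / ((max t τ₁ : ℕ) : ℝ) :=
        div_le_div_of_nonneg_left hBj.le hmaxpos hmax --  hBj hmaxpos hmax
      have := mul_le_mul_of_nonneg_left h1' hc0
      exact add_le_add_left this _
    have hsum := Finset.sum_le_sum hbound
    rw [Finset.sum_const, Nat.card_Icc, Nat.add_sub_cancel, nsmul_eq_mul] at hsum
    rw [ge_iff_le]
    calc 1 - α + α / (1 + L)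
        = (1 / (TP:ℝ)) * ((TP:ℝ) * (1 - α + α / (1 + L))) := by field_simp
      _ ≤ (1 / (TP:ℝ)) * ∑ t ∈ Finset.Icc 1 TP, min (⨅ j, lam t j / ρ TP j) 1 :=
          mul_le_mul_of_nonneg_left hsum (by positivity)
end
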